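/- Let G be a finite group, N ⊴ G, and x ∈ G with gcd(o(x), |N|) = 1, where o(x) is the order of x. If the coset xN is rational in G/N, then x is rational in G. -/

import Mathlib

open Subgroup Finset

theorem aux_conj {G : Type*} [Group G] [Finite G] (N : Subgroup G) [N.Normal] {y z : G}
    (hcop : Nat.Coprime (orderOf y) (Nat.card N))
    (hzo : orderOf z = orderOf y) (hmem : y⁻¹ * z ∈ N) : IsConj y z := by
  classical
  have : Fintype G := Fintype.ofFinite G
  set o := orderOf y with ho
  set n := Nat.card N with hn
  obtain ⟨e, he1, he0⟩ := Nat.chineseRemainder hcop 1 0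
  have hne : n ∣ e := (Nat.modEq_zero_iff_dvd).mp he0
  have hNcardpow : ∀ c : G, c ∈ N → c ^ n = 1 := by
    intro c hc
    have h2 : (⟨c, hc⟩ : N) ^ n = 1 := pow_card_eq_one'
    have h3 := congrArg (Subtype.val) h2
    simpa using h3
  have hNpow : ∀ c : G, c ∈ N → c ^ e = 1 := by
    intro c hc
    obtain ⟨k, hk⟩ := hne
    rw [hk, pow_mul, hNcardpow c hc, one_pow]
  have hEfix : ∀ w : G, orderOf w = o → w ^ e = w := by
    intro w hw
    conv_rhs => rw [← pow_one w]
    rw [← pow_mod_orderOf, ← pow_mod_orderOf w 1, hw]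
    exact congrArg (w ^ ·) he1
  have hObar : orderOf ((y : G ⧸ N)) = o := by
    have hdd1 : orderOf ((y : G ⧸ N)) ∣ o := orderOf_map_dvd (QuotientGroup.mk' N) y
    have hdd2 : o ∣ orderOf ((y : G ⧸ N)) := by
      have h2 : (y : G ⧸ N) ^ orderOf ((y : G ⧸ N)) = 1 := pow_orderOf_eq_one _
      rw [← QuotientGroup.mk_pow, QuotientGroup.eq_one_iff] at h2
      have h4 : (y ^ orderOf ((y : G ⧸ N))) ^ n = 1 := hNcardpow _ h2
      rw [← pow_mul] at h4
      exact Nat.Coprime.dvd_of_dvd_mul_right hcop (orderOf_dvd_of_pow_eq_one h4)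
    exact Nat.dvd_antisymm hdd1 hdd2
  have hPow : ∀ w : G, y⁻¹ * w ∈ N → (y⁻¹ * w ^ e ∈ N ∧ orderOf (w ^ e) = o) := by
    intro w hw
    have hmk : (w : G ⧸ N) = (y : G ⧸ N) := by symm; rw [QuotientGroup.eq]; exact hw
    have hwon : orderOf w ∣ o * n := by
      apply orderOf_dvd_of_pow_eq_one
      have hwoN : w ^ o ∈ N := by
        have h3 : ((w : G ⧸ N)) ^ o = 1 := by
          rw [hmk, ← QuotientGroup.mk_pow, pow_orderOf_eq_one, QuotientGroup.mk_one]
        rwa [← QuotientGroup.mk_pow, QuotientGroup.eq_one_iff] at h3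
      rw [pow_mul]
      exact hNcardpow _ hwoN
    have hdvd : orderOf w ∣ e * o := hwon.trans
      (by rw [Nat.mul_comm e o]; exact Nat.mul_dvd_mul_left o hne)
    have h1 : (w ^ e) ^ o = 1 := by
      rw [← pow_mul]; exact orderOf_dvd_iff_pow_eq_one.mp hdvd
    have hmke : ((w ^ e : G) : G ⧸ N) = (y : G ⧸ N) := by
      rw [QuotientGroup.mk_pow, hmk, ← QuotientGroup.mk_pow, hEfix y rfl]
    constructor
    · rw [← QuotientGroup.eq]; exact hmke.symm
    · refine Nat.dvd_antisymm (orderOf_dvd_of_pow_eq_one h1) ?_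
      rw [← hObar, ← hmke]
      exact orderOf_map_dvd (QuotientGroup.mk' N) (w ^ e)
  -- Finsets
  set NS : Finset G := univ.filter (· ∈ N) with hNS
  set SF : Finset G := univ.filter (fun w => y⁻¹ * w ∈ N) with hSF
  set ΩF : Finset G := univ.filter (fun w => y⁻¹ * w ∈ N ∧ orderOf w = o) with hΩF
  set OF : Finset G := NS.image (fun a => a * y * a⁻¹) with hOF
  set f : G → ℕ := fun z0 => (univ.filter (fun c => c ∈ N ∧ z0 * c = c * z0)).card with hf
  have hNScard : NS.card = n := by
    rw [hn, Nat.card_eq_fintype_card, Fintype.card_subtype]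
  have hSFcard : SF.card = n := by
    rw [← hNScard]
    apply Finset.card_nbij' (fun w => y⁻¹ * w) (fun a => y * a)
    · intro w hw; simp only [hSF, Finset.mem_coe, mem_filter, mem_univ, true_and] at hw
      simp [hNS, hw]
    · intro a ha; simp only [hNS, Finset.mem_coe, mem_filter, mem_univ, true_and] at ha
      simp [hSF, ha]
    · intro w _; simp [← mul_assoc]
    · intro a _; simp [← mul_assoc]
  have hfpos : ∀ z0 : G, 0 < f z0 :=
    fun z0 => Finset.card_pos.mpr ⟨1, by simp [hf, N.one_mem]⟩
  -- sum over fibers of w ↦ w ^ e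
  have hmaps : ∀ w ∈ SF, w ^ e ∈ ΩF := by
    intro w hw
    simp only [hSF, mem_filter, mem_univ, true_and] at hw
    obtain ⟨h1, h2⟩ := hPow w hw
    simp [hΩF, h1, h2]
  have hsum1 : SF.card = ∑ z0 ∈ ΩF, (SF.filter (fun w => w ^ e = z0)).card :=
    Finset.card_eq_sum_card_fiberwise hmaps
  have hfiber1 : ∀ z0 ∈ ΩF, (SF.filter (fun w => w ^ e = z0)).card = f z0 := by
    intro z0 hz0
    simp only [hΩF, mem_filter, mem_univ, true_and] at hz0
    obtain ⟨hz0N, hz0o⟩ := hz0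
    rw [hf]
    apply Finset.card_nbij' (fun w => z0⁻¹ * w) (fun c => z0 * c)
    · intro w hw
      simp only [hSF, Finset.mem_coe, mem_filter, mem_univ, true_and] at hw ⊢
      obtain ⟨hwS, hwe⟩ := hw
      have hcw : w * z0 = z0 * w := by rw [← hwe]; exact (Commute.self_pow w e).eq
      refine ⟨?_, ?_⟩
      · have h5 : z0⁻¹ * w = (y⁻¹ * z0)⁻¹ * (y⁻¹ * w) := by group
        rw [h5]; exact N.mul_mem (N.inv_mem hz0N) hwS
      · rw [mul_inv_cancel_left, mul_assoc, hcw, inv_mul_cancel_left]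
    · intro c hc
      simp only [hSF, Finset.mem_coe, mem_filter, mem_univ, true_and] at hc ⊢
      obtain ⟨hcN, hcz⟩ := hc
      refine ⟨?_, ?_⟩
      · rw [← mul_assoc]; exact N.mul_mem hz0N hcN
      · rw [(Commute.mul_pow (show Commute z0 c from hcz) e : (z0 * c) ^ e = _),
          hEfix z0 hz0o, hNpow c hcN, mul_one]
    · intro w _; simp
    · intro c _; simp
  -- sum over fibers of the conjugation map a ↦ a * y * a⁻¹
  have hsum2 : NS.card = ∑ z0 ∈ OF, (NS.filter (fun a => a * y * a⁻¹ = z0)).card :=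
    Finset.card_eq_sum_card_fiberwise (fun a ha => mem_image_of_mem _ ha)
  have hfiber2 : ∀ z0 ∈ OF, (NS.filter (fun a => a * y * a⁻¹ = z0)).card = f z0 := by
    intro z0 hz0
    rw [hOF] at hz0
    obtain ⟨a0, ha0, ha0z⟩ := Finset.mem_image.mp hz0
    simp only [hNS, mem_filter, mem_univ, true_and] at ha0
    rw [hf]
    symm
    apply Finset.card_nbij' (fun c => c * a0) (fun b => b * a0⁻¹)
    · intro c hc
      simp only [hNS, Finset.mem_coe, mem_filter, mem_univ, true_and] at hc ⊢
      obtain ⟨hcN, hcz⟩ := hc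
      refine ⟨N.mul_mem hcN ha0, ?_⟩
      have h6 : c * a0 * y * (c * a0)⁻¹ = c * (a0 * y * a0⁻¹) * c⁻¹ := by group
      rw [h6, ha0z, ← hcz, mul_inv_cancel_right]
    · intro b hb
      simp only [hNS, Finset.mem_coe, mem_filter, mem_univ, true_and] at hb ⊢
      obtain ⟨hbN, hbz⟩ := hb
      refine ⟨N.mul_mem hbN (N.inv_mem ha0), ?_⟩
      have h7 : (b * a0⁻¹) * z0 * (b * a0⁻¹)⁻¹ = z0 := by
        conv_lhs => rw [← ha0z]
        conv_rhs => rw [← hbz]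
        group
      have h8 := congrArg (· * (b * a0⁻¹)) h7
      simpa [mul_assoc] using h8.symm
    · intro c _; simp
    · intro b _; simp
  -- combine
  have hOsub : OF ⊆ ΩF := by
    intro z0 hz0
    rw [hOF] at hz0
    obtain ⟨a0, ha0, ha0z⟩ := Finset.mem_image.mp hz0
    simp only [hNS, mem_filter, mem_univ, true_and] at ha0
    simp only [hΩF, mem_filter, mem_univ, true_and]
    constructor
    · rw [← ha0z]
      have h9 : y⁻¹ * (a0 * y * a0⁻¹) = (y⁻¹ * a0 * y) * a0⁻¹ := by group
      rw [h9]
      refine N.mul_mem ?_ (N.inv_mem ha0)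
      simpa using Subgroup.Normal.conj_mem ‹N.Normal› a0 ha0 y⁻¹
    · rw [← ha0z]
      exact (SemiconjBy.orderOf_eq a0 (by group : a0 * y = (a0 * y * a0⁻¹) * a0)).symm
  have hsums : ∑ z0 ∈ ΩF, f z0 = ∑ z0 ∈ OF, f z0 := by
    have e1 : ∑ z0 ∈ ΩF, f z0 = n := by
      rw [← Finset.sum_congr rfl hfiber1, ← hsum1, hSFcard]
    have e2 : ∑ z0 ∈ OF, f z0 = n := by
      rw [← Finset.sum_congr rfl hfiber2, ← hsum2, hNScard]
    rw [e1, e2]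
  have hΩsub : ΩF ⊆ OF := by
    have hzero : ∑ z0 ∈ ΩF \ OF, f z0 = 0 := by
      have := Finset.sum_sdiff (f := f) hOsub
      omega
    intro w hw
    by_contra hwn
    have hwmem : w ∈ ΩF \ OF := Finset.mem_sdiff.mpr ⟨hw, hwn⟩
    have := (Finset.sum_eq_zero_iff.mp hzero) w hwmem
    have := hfpos w
    omega
  have hzΩ : z ∈ ΩF := by simp [hΩF, hmem, hzo]
  obtain ⟨a, ha, haz⟩ := Finset.mem_image.mp (hΩsub hzΩ)
  exact isConj_iff.mpr ⟨a, haz⟩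

/-- An element `x` of a finite group is *rational* if it is conjugate to every
generator of the cyclic group `⟨x⟩`. -/
def IsRationalElement {G : Type*} [Group G] (x : G) : Prop :=
  ∀ y : G, Subgroup.zpowers y = Subgroup.zpowers x → IsConj x y

/-- If `gcd(o(x), |N|) = 1` and `xN` is rational in `G/N`, then `x` is rational in `G`. -/
theorem rational_of_quotient_coprime {G : Type*} [Group G] [Finite G] (N : Subgroup G)
    [N.Normal] (x : G) (hcop : Nat.Coprime (orderOf x) (Nat.card N))
    (hx : IsRationalElement (QuotientGroup.mk x : G ⧸ N)) :
    IsRationalElement x := by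
  intro y hy
  have horder : orderOf y = orderOf x := by
    rw [← Nat.card_zpowers, ← Nat.card_zpowers, hy]
  -- the coset of y generates the same cyclic subgroup as that of x
  have hq : Subgroup.zpowers ((y : G ⧸ N)) = Subgroup.zpowers ((x : G ⧸ N)) := by
    have h1 := MonoidHom.map_zpowers (QuotientGroup.mk' N) y
    have h2 := MonoidHom.map_zpowers (QuotientGroup.mk' N) x
    simp only [QuotientGroup.mk'_apply] at h1 h2
    rw [← h1, ← h2, hy]
  have hconjq : IsConj ((x : G ⧸ N)) ((y : G ⧸ N)) := hx _ hq
  obtain ⟨c, hc⟩ := isConj_iff.mp hconjq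
  obtain ⟨g, rfl⟩ := QuotientGroup.mk_surjective c
  have hmk : ((g * x * g⁻¹ : G) : G ⧸ N) = ((y : G) : G ⧸ N) := by
    simpa using hc
  have hmem : y⁻¹ * (g * x * g⁻¹) ∈ N := by
    rw [← QuotientGroup.eq]; exact hmk.symm
  have hzo : orderOf (g * x * g⁻¹) = orderOf y := by
    rw [horder]
    exact (SemiconjBy.orderOf_eq g (by group : g * x = (g * x * g⁻¹) * g)).symm
  have hconj1 : IsConj y (g * x * g⁻¹) :=
    aux_conj N (hcop := by rw [horder]; exact hcop) hzo hmem
  have hconj2 : IsConj x (g * x * g⁻¹) := isConj_iff.mpr ⟨g, rfl⟩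
  exact hconj2.trans hconj1.symm
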